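/- Let X be a real vector space of dimension at least 2 endowed with two norms ‖·‖₁ and ‖·‖₂, with associated functionals ρ*,₁ and ρ*,₂. The following conditions are equivalent: (i) the norms ‖·‖₁ and ‖·‖₂ are equivalent (i.e., there are constants 0 < m ≤ M with m‖x‖₁ ≤ ‖x‖₂ ≤ M‖x‖₁ for all x); (ii) there exists a positive constant α such that |ρ*,₁(x,y) − ρ*,₂(x,y)| ≤ α·min{‖x‖₁²·‖y‖₁², ‖x‖₂²·‖y‖₂²} for all x,y ∈ X. -/

import Mathlib

open Filter Topology Set

/-- `N : X → ℝ` is a norm on the real vector space `X`. -/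
def IsNorm {X : Type*} [AddCommGroup X] [Module ℝ X] (N : X → ℝ) : Prop :=
  (∀ x : X, N x = 0 ↔ x = 0) ∧
  (∀ (t : ℝ) (x : X), N (t • x) = |t| * N x) ∧
  (∀ x y : X, N (x + y) ≤ N x + N y)

/-- The norm derivative `ρ₊` computed with respect to the norm `N`. -/
noncomputable def rhoPlusN {X : Type*} [AddCommGroup X] [Module ℝ X] (N : X → ℝ)
    (x y : X) : ℝ :=
  limUnder (𝓝[>] (0 : ℝ)) (fun t : ℝ => (N (x + t • y) ^ 2 - N x ^ 2) / (2 * t))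

/-- The norm derivative `ρ₋` computed with respect to the norm `N`. -/
noncomputable def rhoMinusN {X : Type*} [AddCommGroup X] [Module ℝ X] (N : X → ℝ)
    (x y : X) : ℝ :=
  limUnder (𝓝[<] (0 : ℝ)) (fun t : ℝ => (N (x + t • y) ^ 2 - N x ^ 2) / (2 * t))

/-- `ρ*` computed with respect to the norm `N`. -/
noncomputable def rhoStarN {X : Type*} [AddCommGroup X] [Module ℝ X] (N : X → ℝ)
    (x y : X) : ℝ :=
  rhoMinusN N x y * rhoPlusN N x y

section Aux

variable {X : Type*} [AddCommGroup X] [Module ℝ X] {N : X → ℝ}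

lemma IsNorm.nonneg' (h : IsNorm N) (x : X) : 0 ≤ N x := by
  have h0 : N (0 : X) = 0 := (h.1 0).2 rfl
  have hneg : N (-x) = N x := by simpa using h.2.1 (-1) x
  have htri := h.2.2 x (-x)
  rw [add_neg_cancel, h0, hneg] at htri
  linarith

lemma isnorm_convex (h : IsNorm N) (x y : X) :
    ConvexOn ℝ univ (fun t : ℝ => N (x + t • y)) := by
  refine ⟨convex_univ, fun a _ b _ p q hp hq hpq => ?_⟩
  simp only [smul_eq_mul]
  obtain rfl : q = 1 - p := by linarith
  have hx : x + (p * a + (1 - p) * b) • y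
      = p • (x + a • y) + (1 - p) • (x + b • y) := by module
  calc N (x + (p * a + (1 - p) * b) • y)
      = N (p • (x + a • y) + (1 - p) • (x + b • y)) := by rw [hx]
    _ ≤ N (p • (x + a • y)) + N ((1 - p) • (x + b • y)) := h.2.2 _ _
    _ = p * N (x + a • y) + (1 - p) * N (x + b • y) := by
        rw [h.2.1, h.2.1, abs_of_nonneg hp, abs_of_nonneg hq]

lemma isnorm_convex_sq (h : IsNorm N) (x y : X) :
    ConvexOn ℝ univ (fun t : ℝ => N (x + t • y) ^ 2) := by
  have h2 := (isnorm_convex h x y).pow (fun t _ => h.nonneg' _) 2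
  exact h2

lemma isnorm_quot_bound (h : IsNorm N) (x y : X) {t : ℝ} (ht : t ≠ 0) :
    |(N (x + t • y) ^ 2 - N x ^ 2) / (2 * t)| ≤ N y * (2 * N x + |t| * N y) / 2 := by
  have hNy := h.nonneg' y
  have hNx := h.nonneg' x
  have hNa := h.nonneg' (x + t • y)
  have habsT : (0:ℝ) ≤ |t| := abs_nonneg t
  have h1 : N (x + t • y) ≤ N x + |t| * N y := by
    have := h.2.2 x (t • y)
    rwa [h.2.1] at this
  have h2 : N x ≤ N (x + t • y) + |t| * N y := by
    have := h.2.2 (x + t • y) (-(t • y))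
    rw [add_neg_cancel_right, ← neg_smul, h.2.1, abs_neg] at this
    exact this
  have hub : |N (x + t • y) ^ 2 - N x ^ 2| ≤ |t| * N y * (2 * N x + |t| * N y) := by
    rw [abs_le]
    constructor <;> nlinarith
  have htpos : (0:ℝ) < 2 * |t| := by positivity
  calc |(N (x + t • y) ^ 2 - N x ^ 2) / (2 * t)|
      = |N (x + t • y) ^ 2 - N x ^ 2| / (2 * |t|) := by
        rw [abs_div, abs_mul, abs_two]
    _ ≤ (|t| * N y * (2 * N x + |t| * N y)) / (2 * |t|) := by gcongr
    _ = N y * (2 * N x + |t| * N y) / 2 := by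
        have ht' : |t| ≠ 0 := ne_of_gt (abs_pos.mpr ht)
        field_simp

lemma rhoPlus_tendsto (h : IsNorm N) (x y : X) :
    Tendsto (fun t : ℝ => (N (x + t • y) ^ 2 - N x ^ 2) / (2 * t)) (𝓝[>] 0)
      (𝓝 (rhoPlusN N x y)) := by
  set f : ℝ → ℝ := fun t => N (x + t • y) ^ 2 with hf
  set q : ℝ → ℝ := fun t => (f t - f 0) / (2 * t) with hqdef
  have hqe : (fun t : ℝ => (N (x + t • y) ^ 2 - N x ^ 2) / (2 * t)) = q := by
    funext t; simp [hqdef, hf]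
  have hconv := isnorm_convex_sq h x y
  have hqalt : ∀ t : ℝ, q t = ((f t - f 0) / t) / 2 := by
    intro t; simp only [hqdef]; rw [mul_comm, ← div_div]
  have hmono : MonotoneOn q (Ioi (0:ℝ)) := by
    intro s hs t ht hst
    have key : (f s - f 0) / (s - 0) ≤ (f t - f 0) / (t - 0) :=
      hconv.secant_mono (mem_univ 0) (mem_univ s) (mem_univ t)
        (ne_of_gt (mem_Ioi.mp hs)) (ne_of_gt (mem_Ioi.mp ht)) hst
    simp only [sub_zero] at key
    rw [hqalt, hqalt]
    linarith
  have hbdd : BddBelow (q '' Ioi (0:ℝ)) := by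
    refine ⟨((f (-1) - f 0) / (-1)) / 2, ?_⟩
    rintro _ ⟨t, ht, rfl⟩
    have htpos := mem_Ioi.mp ht
    have key : (f (-1) - f 0) / (-1 - 0) ≤ (f t - f 0) / (t - 0) :=
      hconv.secant_mono (mem_univ 0) (mem_univ (-1)) (mem_univ t)
        (by norm_num) (ne_of_gt htpos) (by linarith)
    simp only [sub_zero] at key
    rw [hqalt]
    linarith
  have htend := hmono.tendsto_nhdsGT hbdd
  have hlim : rhoPlusN N x y = sInf (q '' Ioi 0) := by
    unfold rhoPlusN
    rw [hqe]
    exact htend.limUnder_eq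
  rw [hqe, hlim]
  exact htend

lemma rhoMinus_tendsto (h : IsNorm N) (x y : X) :
    Tendsto (fun t : ℝ => (N (x + t • y) ^ 2 - N x ^ 2) / (2 * t)) (𝓝[<] 0)
      (𝓝 (rhoMinusN N x y)) := by
  set f : ℝ → ℝ := fun t => N (x + t • y) ^ 2 with hf
  set q : ℝ → ℝ := fun t => (f t - f 0) / (2 * t) with hqdef
  have hqe : (fun t : ℝ => (N (x + t • y) ^ 2 - N x ^ 2) / (2 * t)) = q := by
    funext t; simp [hqdef, hf]
  have hconv := isnorm_convex_sq h x y
  have hqalt : ∀ t : ℝ, q t = ((f t - f 0) / t) / 2 := by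
    intro t; simp only [hqdef]; rw [mul_comm, ← div_div]
  have hmono : MonotoneOn q (Iio (0:ℝ)) := by
    intro s hs t ht hst
    have key : (f s - f 0) / (s - 0) ≤ (f t - f 0) / (t - 0) :=
      hconv.secant_mono (mem_univ 0) (mem_univ s) (mem_univ t)
        (ne_of_lt (mem_Iio.mp hs)) (ne_of_lt (mem_Iio.mp ht)) hst
    simp only [sub_zero] at key
    rw [hqalt, hqalt]
    linarith
  have hbdd : BddAbove (q '' Iio (0:ℝ)) := by
    refine ⟨((f 1 - f 0) / 1) / 2, ?_⟩
    rintro _ ⟨t, ht, rfl⟩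
    have htneg := mem_Iio.mp ht
    have key : (f t - f 0) / (t - 0) ≤ (f 1 - f 0) / (1 - 0) :=
      hconv.secant_mono (mem_univ 0) (mem_univ t) (mem_univ 1)
        (ne_of_lt htneg) (by norm_num) (by linarith)
    simp only [sub_zero] at key
    rw [hqalt]
    linarith
  have htend := hmono.tendsto_nhdsLT hbdd
  have hlim : rhoMinusN N x y = sSup (q '' Iio 0) := by
    unfold rhoMinusN
    rw [hqe]
    exact htend.limUnder_eq
  rw [hqe, hlim]
  exact htend

lemma bound_tendsto (c d : ℝ) (l : Filter ℝ) (hl : l ≤ 𝓝 0) :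
    Tendsto (fun t : ℝ => d * (2 * c + |t| * d) / 2) l (𝓝 (c * d)) := by
  have hcont : Continuous fun t : ℝ => d * (2 * c + |t| * d) / 2 := by fun_prop
  have h0 : d * (2 * c + |(0:ℝ)| * d) / 2 = c * d := by
    rw [abs_zero]; ring
  have := (hcont.tendsto 0).mono_left hl
  rwa [h0] at this

lemma rhoPlus_abs_le (h : IsNorm N) (x y : X) : |rhoPlusN N x y| ≤ N x * N y := by
  have htend := rhoPlus_tendsto h x y
  have hB := bound_tendsto (N x) (N y) (𝓝[>] 0) nhdsWithin_le_nhds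
  have hub : ∀ᶠ t in 𝓝[>] (0:ℝ),
      (N (x + t • y) ^ 2 - N x ^ 2) / (2 * t) ≤ N y * (2 * N x + |t| * N y) / 2 := by
    filter_upwards [self_mem_nhdsWithin] with t ht
    exact (abs_le.mp (isnorm_quot_bound h x y (ne_of_gt (mem_Ioi.mp ht)))).2
  have hlb : ∀ᶠ t in 𝓝[>] (0:ℝ),
      -(N y * (2 * N x + |t| * N y) / 2) ≤ (N (x + t • y) ^ 2 - N x ^ 2) / (2 * t) := by
    filter_upwards [self_mem_nhdsWithin] with t ht
    exact (abs_le.mp (isnorm_quot_bound h x y (ne_of_gt (mem_Ioi.mp ht)))).1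
  rw [abs_le]
  constructor
  · exact le_of_tendsto_of_tendsto hB.neg htend hlb
  · exact le_of_tendsto_of_tendsto htend hB hub

lemma rhoMinus_abs_le (h : IsNorm N) (x y : X) : |rhoMinusN N x y| ≤ N x * N y := by
  have htend := rhoMinus_tendsto h x y
  have hB := bound_tendsto (N x) (N y) (𝓝[<] 0) nhdsWithin_le_nhds
  have hub : ∀ᶠ t in 𝓝[<] (0:ℝ),
      (N (x + t • y) ^ 2 - N x ^ 2) / (2 * t) ≤ N y * (2 * N x + |t| * N y) / 2 := by
    filter_upwards [self_mem_nhdsWithin] with t ht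
    exact (abs_le.mp (isnorm_quot_bound h x y (ne_of_lt (mem_Iio.mp ht)))).2
  have hlb : ∀ᶠ t in 𝓝[<] (0:ℝ),
      -(N y * (2 * N x + |t| * N y) / 2) ≤ (N (x + t • y) ^ 2 - N x ^ 2) / (2 * t) := by
    filter_upwards [self_mem_nhdsWithin] with t ht
    exact (abs_le.mp (isnorm_quot_bound h x y (ne_of_lt (mem_Iio.mp ht)))).1
  rw [abs_le]
  constructor
  · exact le_of_tendsto_of_tendsto hB.neg htend hlb
  · exact le_of_tendsto_of_tendsto htend hB hub

lemma rhoStar_abs_le (h : IsNorm N) (x y : X) :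
    |rhoStarN N x y| ≤ N x ^ 2 * N y ^ 2 := by
  unfold rhoStarN
  rw [abs_mul]
  have h1 := rhoMinus_abs_le h x y
  have h2 := rhoPlus_abs_le h x y
  have h3 := abs_nonneg (rhoMinusN N x y)
  have h4 := abs_nonneg (rhoPlusN N x y)
  nlinarith

lemma rhoPlus_self (h : IsNorm N) (x : X) : rhoPlusN N x x = N x ^ 2 := by
  have hev : ∀ᶠ t in 𝓝[>] (0:ℝ),
      N x ^ 2 * (1 + t / 2) = (N (x + t • x) ^ 2 - N x ^ 2) / (2 * t) := by
    filter_upwards [self_mem_nhdsWithin] with t ht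
    have htpos := mem_Ioi.mp ht
    have h1 : x + t • x = (1 + t) • x := by module
    have ht' : t ≠ 0 := ne_of_gt htpos
    rw [h1, h.2.1, abs_of_pos (by linarith : (0:ℝ) < 1 + t)]
    field_simp
    ring
  have hc : Tendsto (fun t : ℝ => N x ^ 2 * (1 + t / 2)) (𝓝[>] 0) (𝓝 (N x ^ 2)) := by
    have hcont : Continuous fun t : ℝ => N x ^ 2 * (1 + t / 2) := by fun_prop
    have hle : (𝓝[>] (0:ℝ)) ≤ 𝓝 0 := nhdsWithin_le_nhds
    simpa using (hcont.tendsto 0).mono_left hle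
  exact (hc.congr' hev).limUnder_eq

lemma rhoMinus_self (h : IsNorm N) (x : X) : rhoMinusN N x x = N x ^ 2 := by
  have hev : ∀ᶠ t in 𝓝[<] (0:ℝ),
      N x ^ 2 * (1 + t / 2) = (N (x + t • x) ^ 2 - N x ^ 2) / (2 * t) := by
    filter_upwards [Ioo_mem_nhdsLT_of_mem (by norm_num : (0:ℝ) ∈ Ioc (-1) 0)] with t ht
    obtain ⟨ht1, ht2⟩ := ht
    have h1 : x + t • x = (1 + t) • x := by module
    have ht' : t ≠ 0 := ne_of_lt ht2
    rw [h1, h.2.1, abs_of_pos (by linarith : (0:ℝ) < 1 + t)]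
    field_simp
    ring
  have hc : Tendsto (fun t : ℝ => N x ^ 2 * (1 + t / 2)) (𝓝[<] 0) (𝓝 (N x ^ 2)) := by
    have hcont : Continuous fun t : ℝ => N x ^ 2 * (1 + t / 2) := by fun_prop
    have hle : (𝓝[<] (0:ℝ)) ≤ 𝓝 0 := nhdsWithin_le_nhds
    simpa using (hcont.tendsto 0).mono_left hle
  exact (hc.congr' hev).limUnder_eq

lemma rhoStar_self (h : IsNorm N) (x : X) : rhoStarN N x x = N x ^ 2 * N x ^ 2 := by
  unfold rhoStarN
  rw [rhoPlus_self h, rhoMinus_self h]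

end Aux

theorem equivalent_norms_iff_rhoStar_close {X : Type*} [AddCommGroup X] [Module ℝ X]
    (hdim : 2 ≤ Module.rank ℝ X) (N₁ N₂ : X → ℝ) (h₁ : IsNorm N₁) (h₂ : IsNorm N₂) :
    (∃ m M : ℝ, 0 < m ∧ m ≤ M ∧ ∀ x : X, m * N₁ x ≤ N₂ x ∧ N₂ x ≤ M * N₁ x) ↔
    (∃ α : ℝ, 0 < α ∧ ∀ x y : X,
      |rhoStarN N₁ x y - rhoStarN N₂ x y| ≤
        α * min (N₁ x ^ 2 * N₁ y ^ 2) (N₂ x ^ 2 * N₂ y ^ 2)) := by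
  constructor
  · rintro ⟨m, M, hm, hmM, hbound⟩
    have hM : 0 < M := lt_of_lt_of_le hm hmM
    refine ⟨max (1 + M ^ 4) (1 + (1 / m) ^ 4),
      lt_of_lt_of_le (by positivity) (le_max_left _ _), fun x y => ?_⟩
    have b1 := rhoStar_abs_le h₁ x y
    have b2 := rhoStar_abs_le h₂ x y
    have key : |rhoStarN N₁ x y - rhoStarN N₂ x y| ≤
        N₁ x ^ 2 * N₁ y ^ 2 + N₂ x ^ 2 * N₂ y ^ 2 :=
      (abs_sub _ _).trans (add_le_add b1 b2)
    have hx1 := h₁.nonneg' x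
    have hy1 := h₁.nonneg' y
    have hx2 := h₂.nonneg' x
    have hy2 := h₂.nonneg' y
    have hxu := (hbound x).2
    have hyu := (hbound y).2
    have hxl := (hbound x).1
    have hyl := (hbound y).1
    have c1 : N₂ x ^ 2 * N₂ y ^ 2 ≤ M ^ 4 * (N₁ x ^ 2 * N₁ y ^ 2) := by
      have sx : N₂ x ^ 2 ≤ (M * N₁ x) ^ 2 := pow_le_pow_left₀ hx2 hxu 2
      have sy : N₂ y ^ 2 ≤ (M * N₁ y) ^ 2 := pow_le_pow_left₀ hy2 hyu 2
      calc N₂ x ^ 2 * N₂ y ^ 2 ≤ (M * N₁ x) ^ 2 * (M * N₁ y) ^ 2 :=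
            mul_le_mul sx sy (by positivity) (by positivity)
        _ = M ^ 4 * (N₁ x ^ 2 * N₁ y ^ 2) := by ring
    have c2 : N₁ x ^ 2 * N₁ y ^ 2 ≤ (1 / m) ^ 4 * (N₂ x ^ 2 * N₂ y ^ 2) := by
      have hx' : N₁ x ≤ (1 / m) * N₂ x := by
        rw [div_mul_eq_mul_div, le_div_iff₀ hm]; linarith
      have hy' : N₁ y ≤ (1 / m) * N₂ y := by
        rw [div_mul_eq_mul_div, le_div_iff₀ hm]; linarith
      have sx : N₁ x ^ 2 ≤ (1 / m * N₂ x) ^ 2 := pow_le_pow_left₀ hx1 hx' 2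
      have sy : N₁ y ^ 2 ≤ (1 / m * N₂ y) ^ 2 := pow_le_pow_left₀ hy1 hy' 2
      calc N₁ x ^ 2 * N₁ y ^ 2 ≤ (1 / m * N₂ x) ^ 2 * (1 / m * N₂ y) ^ 2 :=
            mul_le_mul sx sy (by positivity) (by positivity)
        _ = (1 / m) ^ 4 * (N₂ x ^ 2 * N₂ y ^ 2) := by ring
    rcases le_total (N₁ x ^ 2 * N₁ y ^ 2) (N₂ x ^ 2 * N₂ y ^ 2) with hc | hc
    · rw [min_eq_left hc]
      have hmax : 1 + M ^ 4 ≤ max (1 + M ^ 4) (1 + (1 / m) ^ 4) := le_max_left _ _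
      have hpos : (0:ℝ) ≤ N₁ x ^ 2 * N₁ y ^ 2 := by positivity
      nlinarith
    · rw [min_eq_right hc]
      have hmax : 1 + (1 / m) ^ 4 ≤ max (1 + M ^ 4) (1 + (1 / m) ^ 4) := le_max_right _ _
      have hpos : (0:ℝ) ≤ N₂ x ^ 2 * N₂ y ^ 2 := by positivity
      nlinarith
  · rintro ⟨α, hα, hbound⟩
    have h1α : (0:ℝ) < 1 + α := by linarith
    set M : ℝ := (1 + α) ^ ((1:ℝ) / 4) with hMdef
    have hM0 : 0 < M := Real.rpow_pos_of_pos h1α _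
    have hMpow : M ^ (4:ℕ) = 1 + α := by
      rw [hMdef, ← Real.rpow_natCast ((1 + α) ^ ((1:ℝ)/4)) 4, ← Real.rpow_mul h1α.le]
      norm_num
    have hM1 : 1 ≤ M := by
      by_contra hcon
      push_neg at hcon
      have hlt : M ^ (4:ℕ) < 1 := pow_lt_one₀ hM0.le hcon (by norm_num)
      rw [hMpow] at hlt
      linarith
    refine ⟨M⁻¹, M, inv_pos.mpr hM0, le_trans (inv_le_one_of_one_le₀ hM1) hM1, fun x => ?_⟩
    have hb := hbound x x
    rw [rhoStar_self h₁, rhoStar_self h₂] at hb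
    have ha0 := h₁.nonneg' x
    have hb0 := h₂.nonneg' x
    obtain ⟨habs1, habs2⟩ := abs_le.mp hb
    have hmin1 : min (N₁ x ^ 2 * N₁ x ^ 2) (N₂ x ^ 2 * N₂ x ^ 2) ≤ N₁ x ^ 2 * N₁ x ^ 2 :=
      min_le_left _ _
    have hmin2 : min (N₁ x ^ 2 * N₁ x ^ 2) (N₂ x ^ 2 * N₂ x ^ 2) ≤ N₂ x ^ 2 * N₂ x ^ 2 :=
      min_le_right _ _
    have e1 : N₂ x ^ 2 * N₂ x ^ 2 ≤ (1 + α) * (N₁ x ^ 2 * N₁ x ^ 2) := by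
      have := mul_le_mul_of_nonneg_left hmin1 hα.le
      linarith
    have e2 : N₁ x ^ 2 * N₁ x ^ 2 ≤ (1 + α) * (N₂ x ^ 2 * N₂ x ^ 2) := by
      have := mul_le_mul_of_nonneg_left hmin2 hα.le
      linarith
    constructor
    · rw [inv_mul_le_iff₀ hM0]
      have hp : N₁ x ^ 4 ≤ (M * N₂ x) ^ 4 := by
        calc N₁ x ^ 4 = N₁ x ^ 2 * N₁ x ^ 2 := by ring
          _ ≤ (1 + α) * (N₂ x ^ 2 * N₂ x ^ 2) := e2
          _ = (M * N₂ x) ^ 4 := by rw [mul_pow, hMpow]; ring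
      exact le_of_pow_le_pow_left₀ (by norm_num) (mul_nonneg hM0.le hb0) hp
    · have hp : N₂ x ^ 4 ≤ (M * N₁ x) ^ 4 := by
        calc N₂ x ^ 4 = N₂ x ^ 2 * N₂ x ^ 2 := by ring
          _ ≤ (1 + α) * (N₁ x ^ 2 * N₁ x ^ 2) := e1
          _ = (M * N₁ x) ^ 4 := by rw [mul_pow, hMpow]; ring
      exact le_of_pow_le_pow_left₀ (by norm_num) (mul_nonneg hM0.le ha0) hp
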